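/- Let L ∈ ℝ^{(m+1)×(m+1)} be lower triangular with |l_{ij}| ≤ |l_{jj}| for all i ≥ j. Then ‖L^{-1}‖_{∞→1} ≤ (2^{m+1} − 1) / min_j |l_{jj}|, where ‖B‖_{∞→1} = sup_{x≠0} ‖Bx‖₁/‖x‖_∞. -/

import Mathlib

/-- The `∞ → 1` operator norm: `‖B‖_{∞→1} = sup_{x ≠ 0} ‖Bx‖₁ / ‖x‖_∞`. -/
noncomputable def normInfToOne {n m : ℕ} (B : Matrix (Fin n) (Fin m) ℝ) : ℝ :=
  ⨆ x : {x : Fin m → ℝ // x ≠ 0}, (∑ i, |B.mulVec x.1 i|) / (⨆ j, |x.1 j|)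

lemma sum_filter_lt_eq_range {m : ℕ} (i : Fin (m + 1)) (f : ℕ → ℝ) :
    ∑ j ∈ Finset.univ.filter (fun j : Fin (m + 1) => j < i), f j
      = ∑ k ∈ Finset.range (i : ℕ), f k := by
  have himg : Finset.image Fin.val
      (Finset.univ.filter (fun j : Fin (m + 1) => j < i)) = Finset.range (i : ℕ) := by
    ext k
    simp only [Finset.mem_image, Finset.mem_filter, Finset.mem_univ, true_and,
    Finset.mem_range, Fin.lt_def]
    exact ⟨fun ⟨a, h1, h2⟩ => h2 ▸ h1, fun hk => ⟨⟨k, lt_trans hk i.isLt⟩, hk, rfl⟩⟩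
  rw [← himg, Finset.sum_image (fun a _ b _ h => Fin.val_injective h)]

/-- For a lower triangular `(m + 1) × (m + 1)` matrix `L` whose diagonal entries
dominate their columns in absolute value,
`‖L⁻¹‖_{∞→1} ≤ (2^(m+1) − 1) / min_j |l_jj|`. -/
theorem normInfToOne_inv_lowerTriangular_bound {m : ℕ}
    (L : Matrix (Fin (m + 1)) (Fin (m + 1)) ℝ)
    (htri : ∀ i j : Fin (m + 1), i < j → L i j = 0)
    (hinv : IsUnit L.det)
    (hcol : ∀ i j : Fin (m + 1), j ≤ i → |L i j| ≤ |L j j|) :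
    normInfToOne L⁻¹ ≤ (2 ^ (m + 1) - 1) / ⨅ j : Fin (m + 1), |L j j| := by
  -- diagonal entries are nonzero
  have hdet : L.det = ∏ i, L i i :=
    Matrix.det_of_lowerTriangular L (fun i j h => htri i j h)
  have hd : ∀ j : Fin (m + 1), L j j ≠ 0 := by
    have h0 : L.det ≠ 0 := hinv.ne_zero
    rw [hdet] at h0
    intro j
    exact Finset.prod_ne_zero_iff.mp h0 j (Finset.mem_univ j)
  set δ : ℝ := ⨅ j : Fin (m + 1), |L j j| with hδdef
  have hδmem : sInf (Set.range fun j : Fin (m + 1) => |L j j|)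
      ∈ Set.range fun j : Fin (m + 1) => |L j j| :=
    (Set.range_nonempty _).csInf_mem (Set.finite_range _)
  have hδeq : δ = sInf (Set.range fun j : Fin (m + 1) => |L j j|) := rfl
  obtain ⟨j0, hj0⟩ := hδmem
  have hδpos : 0 < δ := by
    rw [hδeq, ← hj0]; exact abs_pos.mpr (hd j0)
  have hδle : ∀ i : Fin (m + 1), δ ≤ |L i i| := fun i =>
    ciInf_le (Set.Finite.bddBelow (Set.finite_range _)) i
  -- bound the supremum termwise
  have hne : Nonempty {x : Fin (m + 1) → ℝ // x ≠ 0} :=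
    ⟨⟨fun _ => 1, fun h => one_ne_zero (congrFun h 0)⟩⟩
  refine ciSup_le fun ⟨x, hx⟩ => ?_
  set y : Fin (m + 1) → ℝ := L⁻¹.mulVec x with hy
  set M : ℝ := ⨆ j, |x j| with hMdef
  have hM : ∀ j, |x j| ≤ M := fun j => by
    rw [hMdef]
    exact le_ciSup (f := fun j => |x j|) (Set.Finite.bddAbove (Set.finite_range _)) j
  have hMpos : 0 < M := by
    obtain ⟨j, hj⟩ := Function.ne_iff.mp hx
    exact lt_of_lt_of_le (abs_pos.mpr hj) (hM j)
  have hLy : L.mulVec y = x := by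
    rw [hy, Matrix.mulVec_mulVec, Matrix.mul_nonsing_inv L hinv, Matrix.one_mulVec]
  -- forward substitution bound by strong induction
  have key : ∀ n : ℕ, ∀ i : Fin (m + 1), (i : ℕ) = n →
      |L i i| * |y i| ≤ 2 ^ (i : ℕ) * M := by
    intro n
    induction n using Nat.strong_induction_on with
    | _ n IH =>
      intro i hi
      have hxi : x i = ∑ j, L i j * y j := by
        rw [← hLy]; simp [Matrix.mulVec, dotProduct]
      have h1 : ∑ j, L i j * y j
          = ∑ j ∈ Finset.univ.filter (fun j => j ≤ i), L i j * y j := by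
        symm
        apply Finset.sum_subset (Finset.filter_subset _ _)
        intro j _ hj
        have hij : i < j := lt_of_not_ge (by simpa using hj)
        rw [htri i j hij, zero_mul]
      have h2 : Finset.univ.filter (fun j : Fin (m + 1) => j ≤ i)
          = insert i (Finset.univ.filter (fun j => j < i)) := by
        ext j
        simp only [Finset.mem_filter, Finset.mem_univ, true_and, Finset.mem_insert]
        constructor
        · intro h; rcases lt_or_eq_of_le h with h | h
          · exact Or.inr h
          · exact Or.inl h
        · rintro (rfl | h)
          · exact le_refl _
          · exact le_of_lt h
      have h3 : x i = L i i * y i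
          + ∑ j ∈ Finset.univ.filter (fun j => j < i), L i j * y j := by
        rw [hxi, h1, h2, Finset.sum_insert (by simp)]
      have h4 : L i i * y i = x i
          - ∑ j ∈ Finset.univ.filter (fun j => j < i), L i j * y j := by
        rw [h3]; ring
      have hterm : ∀ j ∈ Finset.univ.filter (fun j : Fin (m + 1) => j < i),
          |L i j * y j| ≤ 2 ^ (j : ℕ) * M := by
        intro j hj
        have hji : j < i := (Finset.mem_filter.mp hj).2
        have h5 : |L i j * y j| ≤ |L j j| * |y j| := by
          rw [abs_mul]
          exact mul_le_mul_of_nonneg_right (hcol i j (le_of_lt hji)) (abs_nonneg _)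
        exact h5.trans (IH (j : ℕ) (hi ▸ hji) j rfl)
      calc |L i i| * |y i| = |L i i * y i| := (abs_mul _ _).symm
        _ = |x i - ∑ j ∈ Finset.univ.filter (fun j => j < i), L i j * y j| := by rw [h4]
        _ ≤ |x i| + |∑ j ∈ Finset.univ.filter (fun j => j < i), L i j * y j| :=
            abs_sub _ _
        _ ≤ M + ∑ j ∈ Finset.univ.filter (fun j => j < i), |L i j * y j| := by
            gcongr
            · exact hM i
            · exact Finset.abs_sum_le_sum_abs _ _
        _ ≤ M + ∑ j ∈ Finset.univ.filter (fun j => j < i), 2 ^ (j : ℕ) * M :=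
            add_le_add (le_refl M) (Finset.sum_le_sum hterm)
        _ = M + (∑ k ∈ Finset.range (i : ℕ), (2:ℝ) ^ k) * M := by
            rw [← Finset.sum_mul, sum_filter_lt_eq_range i (fun k => (2:ℝ) ^ k)]
        _ = M + ((2:ℝ) ^ (i : ℕ) - 1) * M := by
            rw [geom_sum_eq (by norm_num) ((i : ℕ))]; norm_num
        _ = 2 ^ (i : ℕ) * M := by ring
  -- bound each |y i|
  have hyb : ∀ i : Fin (m + 1), |y i| ≤ 2 ^ (i : ℕ) * M / δ := by
    intro i
    have h1 : |L i i| * |y i| ≤ 2 ^ (i : ℕ) * M := key (i : ℕ) i rfl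
    have h2 : δ * |y i| ≤ |L i i| * |y i| :=
      mul_le_mul_of_nonneg_right (hδle i) (abs_nonneg _)
    rw [le_div_iff₀ hδpos]
    calc |y i| * δ = δ * |y i| := by ring
      _ ≤ 2 ^ (i : ℕ) * M := h2.trans h1
  -- sum up
  have hsum : ∑ i, |y i| ≤ (2 ^ (m + 1) - 1) * M / δ := by
    calc ∑ i, |y i| ≤ ∑ i : Fin (m + 1), 2 ^ (i : ℕ) * M / δ :=
          Finset.sum_le_sum fun i _ => hyb i
      _ = (∑ i : Fin (m + 1), (2:ℝ) ^ (i : ℕ)) * M / δ := by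
          rw [Finset.sum_mul, Finset.sum_div]
      _ = (∑ k ∈ Finset.range (m + 1), (2:ℝ) ^ k) * M / δ := by
          rw [Fin.sum_univ_eq_sum_range (fun k => (2:ℝ) ^ k)]
      _ = (2 ^ (m + 1) - 1) * M / δ := by
          rw [geom_sum_eq (by norm_num) (m + 1)]; norm_num
  rw [div_le_iff₀ hMpos]
  calc ∑ i, |L⁻¹.mulVec x i| = ∑ i, |y i| := rfl
    _ ≤ (2 ^ (m + 1) - 1) * M / δ := hsum
    _ = (2 ^ (m + 1) - 1) / δ * M := by ring
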